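/- For every integer n ≥ 2, the convex hull of the set {b⁽¹⁾ ∘ b⁽²⁾ ∘ … ∘ b⁽ⁿ⁾ : each b⁽ⁱ⁾ lies in the closed Euclidean unit ball B₁ of ℝ³} (the n-fold Hadamard product being taken componentwise) equals the closed ℓ¹ unit ball (octahedron) O₁ = {x ∈ ℝ³ : |x₁|+|x₂|+|x₃| ≤ 1}. -/

import Mathlib

open BigOperators

lemma aux_basis (n : ℕ) (hn : 2 ≤ n) (j : Fin 3) (s : ℝ) (hs : s = 1 ∨ s = -1) :
    (fun k => if k = j then s else 0) ∈ {x : Fin 3 → ℝ | ∃ b : Fin n → Fin 3 → ℝ,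
        (∀ i, (b i 0) ^ 2 + (b i 1) ^ 2 + (b i 2) ^ 2 ≤ 1) ∧ x = fun j => ∏ i, b i j} := by
  have hn0 : n ≠ 0 := by omega
  set i0 : Fin n := ⟨0, by omega⟩ with hi0
  refine ⟨fun i k => if k = j then (if i = i0 then s else 1) else 0, ?_, ?_⟩
  · intro i
    have hs2 : (if i = i0 then s else 1) ^ 2 ≤ 1 := by
      split <;> rcases hs with h | h <;> simp [h]
    fin_cases j <;> simpa using hs2
  · funext k
    by_cases hk : k = j
    · subst hk
      simp only [if_pos rfl]
      simp [Finset.prod_ite_eq']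
    · simp [hk, Finset.prod_const, zero_pow hn0]

lemma aux_zero (n : ℕ) (hn : 2 ≤ n) :
    (0 : Fin 3 → ℝ) ∈ {x : Fin 3 → ℝ | ∃ b : Fin n → Fin 3 → ℝ,
        (∀ i, (b i 0) ^ 2 + (b i 1) ^ 2 + (b i 2) ^ 2 ≤ 1) ∧ x = fun j => ∏ i, b i j} := by
  have hn0 : n ≠ 0 := by omega
  exact ⟨0, by intro i; norm_num, by funext k; simp [Finset.prod_const, zero_pow hn0]⟩

theorem stmt10 (n : ℕ) (hn : 2 ≤ n) :
    convexHull ℝ {x : Fin 3 → ℝ | ∃ b : Fin n → Fin 3 → ℝ,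
        (∀ i, (b i 0) ^ 2 + (b i 1) ^ 2 + (b i 2) ^ 2 ≤ 1) ∧ x = fun j => ∏ i, b i j}
      = {x : Fin 3 → ℝ | |x 0| + |x 1| + |x 2| ≤ 1} := by
  set S := {x : Fin 3 → ℝ | ∃ b : Fin n → Fin 3 → ℝ,
        (∀ i, (b i 0) ^ 2 + (b i 1) ^ 2 + (b i 2) ^ 2 ≤ 1) ∧ x = fun j => ∏ i, b i j} with hS
  apply le_antisymm
  · -- convexHull S ⊆ O₁
    apply convexHull_min
    · rintro x ⟨b, hb, rfl⟩
      set i0 : Fin n := ⟨0, by omega⟩ with hi0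
      set i1 : Fin n := ⟨1, by omega⟩ with hi1
      have hne : i0 ≠ i1 := by simp [hi0, hi1, Fin.ext_iff]
      have habs : ∀ i (j : Fin 3), |b i j| ≤ 1 := by
        intro i j
        have h := hb i
        have hj : j = 0 ∨ j = 1 ∨ j = 2 := by fin_cases j <;> simp
        have h2 : (b i j) ^ 2 ≤ 1 := by
          rcases hj with rfl | rfl | rfl <;>
            nlinarith [sq_nonneg (b i 0), sq_nonneg (b i 1), sq_nonneg (b i 2)]
        nlinarith [sq_abs (b i j), abs_nonneg (b i j)]
      have key : ∀ j : Fin 3, |∏ i, b i j| ≤ |b i0 j| * |b i1 j| := by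
        intro j
        rw [Finset.abs_prod]
        have hsub : ({i0, i1} : Finset (Fin n)) ⊆ Finset.univ := Finset.subset_univ _
        rw [← Finset.prod_sdiff hsub, Finset.prod_pair hne]
        have h1 : ∏ i ∈ Finset.univ \ {i0, i1}, |b i j| ≤ 1 :=
          Finset.prod_le_one (fun i _ => abs_nonneg _) (fun i _ => habs i j)
        have h2 : 0 ≤ |b i0 j| * |b i1 j| := mul_nonneg (abs_nonneg _) (abs_nonneg _)
        nlinarith [Finset.prod_nonneg (fun i (_ : i ∈ Finset.univ \ {i0, i1}) => abs_nonneg (b i j))]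
      have cs : ∀ j : Fin 3, |b i0 j| * |b i1 j| ≤ ((b i0 j) ^ 2 + (b i1 j) ^ 2) / 2 := by
        intro j
        nlinarith [sq_nonneg (|b i0 j| - |b i1 j|), sq_abs (b i0 j), sq_abs (b i1 j)]
      have h0 := (key 0).trans (cs 0)
      have h1 := (key 1).trans (cs 1)
      have h2 := (key 2).trans (cs 2)
      simp only [Set.mem_setOf_eq]
      have := hb i0
      have := hb i1
      linarith
    · -- O₁ convex
      intro x hx y hy a c ha hc hac
      simp only [Set.mem_setOf_eq] at *
      have e : ∀ j : Fin 3, |(a • x + c • y) j| ≤ a * |x j| + c * |y j| := by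
        intro j
        calc |a * x j + c * y j| ≤ |a * x j| + |c * y j| := abs_add_le _ _
          _ = a * |x j| + c * |y j| := by
              rw [abs_mul, abs_mul, abs_of_nonneg ha, abs_of_nonneg hc]
      have := e 0; have := e 1; have := e 2
      nlinarith [abs_nonneg (x 0), abs_nonneg (x 1), abs_nonneg (x 2),
        abs_nonneg (y 0), abs_nonneg (y 1), abs_nonneg (y 2)]
  · -- O₁ ⊆ convexHull S
    intro x hx
    simp only [Set.mem_setOf_eq] at hx
    set sgn : Fin 3 → ℝ := fun j => if 0 ≤ x j then 1 else -1 with hsgn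
    have hsgn1 : ∀ j, sgn j = 1 ∨ sgn j = -1 := by
      intro j; simp only [hsgn]; split <;> simp
    have habs : ∀ j, |x j| * sgn j = x j := by
      intro j
      by_cases h : 0 ≤ x j
      · simp only [hsgn, if_pos h]
        rw [abs_of_nonneg h]; ring
      · simp only [hsgn, if_neg h]
        rw [abs_of_neg (lt_of_not_ge h)]; ring
    set z : Fin 4 → Fin 3 → ℝ := fun i k =>
      if i = 0 then (if k = 0 then sgn 0 else 0)
      else if i = 1 then (if k = 1 then sgn 1 else 0)
      else if i = 2 then (if k = 2 then sgn 2 else 0)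
      else 0 with hz
    set w : Fin 4 → ℝ := fun i =>
      if i = 0 then |x 0| else if i = 1 then |x 1| else if i = 2 then |x 2|
      else 1 - (|x 0| + |x 1| + |x 2|) with hw
    have hmem : ∀ i : Fin 4, z i ∈ convexHull ℝ S := by
      intro i
      apply subset_convexHull
      fin_cases i
      · exact aux_basis n hn 0 (sgn 0) (hsgn1 0)
      · exact aux_basis n hn 1 (sgn 1) (hsgn1 1)
      · exact aux_basis n hn 2 (sgn 2) (hsgn1 2)
      · exact aux_zero n hn
    have hw0 : ∀ i ∈ Finset.univ, 0 ≤ w i := by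
      have h0 := abs_nonneg (x 0); have h1 := abs_nonneg (x 1); have h2 := abs_nonneg (x 2)
      intro i _
      have hi : i = 0 ∨ i = 1 ∨ i = 2 ∨ i = 3 := by omega
      rcases hi with rfl | rfl | rfl | rfl <;> simp [hw] <;> linarith
    have hw1 : ∑ i, w i = 1 := by
      rw [Fin.sum_univ_four]
      simp [hw]
    have hxeq : x = ∑ i, w i • z i := by
      funext k
      have hsum : (∑ i, w i • z i) k = ∑ i, w i * z i k := by
        simp [Finset.sum_apply]
      rw [hsum, Fin.sum_univ_four]
      have hk : k = 0 ∨ k = 1 ∨ k = 2 := by omega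
      rcases hk with rfl | rfl | rfl <;> simp [hw, hz] <;>
        [linear_combination - habs 0; linear_combination - habs 1; linear_combination - habs 2]
    rw [hxeq]
    exact (convex_convexHull ℝ S).sum_mem hw0 hw1 (fun i _ => hmem i)
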